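/- arXiv:2401.04277 — 5 statements merged into one kernel-verified Lean document; each statement's English description precedes it below -/
import Mathlib

section
/- If the center of a group G is torsion-free, then the factor Z_2(G)/Z_1(G) of the upper central series is torsion-free. -/
private lemma conj_pow_aux {G : Type*} [Group G] (x g c : G)
    (hconj : x * g * x⁻¹ = c * g) (hcx : ∀ k : ℕ, x * c ^ k = c ^ k * x) :
    ∀ m : ℕ, x ^ m * g * (x ^ m)⁻¹ = c ^ m * g := by
  intro m
  induction m with
  | zero => simp
  | succ k ih =>
    calc x ^ (k+1) * g * (x ^ (k+1))⁻¹
        = x * (x ^ k * g * (x ^ k)⁻¹) * x⁻¹ := by rw [pow_succ']; group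
      _ = x * (c ^ k * g) * x⁻¹ := by rw [ih]
      _ = (x * c ^ k) * g * x⁻¹ := by group
      _ = c ^ k * (x * g * x⁻¹) := by rw [hcx k]; group
      _ = c ^ k * (c * g) := by rw [hconj]
      _ = c ^ (k+1) * g := by rw [pow_succ, mul_assoc]

/-- If the center of a group `G` is torsion-free, then the factor `Z₂(G)/Z₁(G)` of the
upper central series is torsion-free: any element of `Z₂` some nonzero power of which lies
in `Z₁` already lies in `Z₁`. -/
theorem upperCentral_factor_two_torsionFree (G : Type*) [Group G]
    (hZ : ∀ g : Subgroup.center G, g ≠ 1 → ¬IsOfFinOrder g) :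
    ∀ x ∈ upperCentralSeries G 2, ∀ n : ℕ, n ≠ 0 →
      x ^ n ∈ upperCentralSeries G 1 → x ∈ upperCentralSeries G 1 := by
  intro x hx n hn hxn
  rw [show upperCentralSeries G 1 = Subgroup.center G from Subgroup.upperCentralSeries_one G] at hxn ⊢
  rw [show (2 : ℕ) = 1 + 1 from rfl, show upperCentralSeries G (1 + 1) = Subgroup.upperCentralSeries G (1 + 1) from rfl, Subgroup.mem_upperCentralSeries_succ_iff] at hx
  simp only [Subgroup.upperCentralSeries_one] at hx
  rw [Subgroup.mem_center_iff] at hxn ⊢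
  intro g
  have hc : x * g * x⁻¹ * g⁻¹ ∈ Subgroup.center G := hx g
  have hconj : x * g * x⁻¹ = (x * g * x⁻¹ * g⁻¹) * g := by group
  have hcx : ∀ k : ℕ, x * (x * g * x⁻¹ * g⁻¹) ^ k = (x * g * x⁻¹ * g⁻¹) ^ k * x :=
    fun k => Subgroup.mem_center_iff.mp (Subgroup.pow_mem _ hc k) x
  have key := conj_pow_aux x g _ hconj hcx n
  have h1 : x ^ n * g * (x ^ n)⁻¹ = g := by rw [← hxn g]; group
  rw [h1] at key
  have hcn : (x * g * x⁻¹ * g⁻¹) ^ n = 1 := by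
    have h2 : (x * g * x⁻¹ * g⁻¹) ^ n * g = 1 * g := by rw [one_mul]; exact key.symm
    exact mul_right_cancel h2
  have hcmem : (⟨_, hc⟩ : Subgroup.center G) ^ n = 1 := by
    ext; simpa using hcn
  have hone : (⟨_, hc⟩ : Subgroup.center G) = 1 := by
    by_contra hne
    exact (hZ _ hne) (isOfFinOrder_iff_pow_eq_one.mpr ⟨n, hn.bot_lt, hcmem⟩)
  have hc1 : x * g * x⁻¹ * g⁻¹ = 1 := congrArg Subtype.val hone
  calc g * x = (x * g * x⁻¹ * g⁻¹) * (g * x) := by rw [hc1, one_mul]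
    _ = x * g := by group
end

section
/- If the center of a group G is torsion-free, then every factor Z_{k+1}(G)/Z_k(G) of the upper central series is torsion-free; in particular, if additionally G is nilpotent, G itself is torsion-free. -/
private lemma comm_pow_aux {Q : Type*} [Group Q] (a b : Q)
    (hz : ∀ w : Q, (a*b*a⁻¹*b⁻¹) * w = w * (a*b*a⁻¹*b⁻¹)) :
    ∀ n : ℕ, a^n * b * (a^n)⁻¹ * b⁻¹ = (a*b*a⁻¹*b⁻¹)^n := by
  intro n
  induction n with
  | zero => simp
  | succ n ih =>
    have hzn : ∀ w : Q, (a*b*a⁻¹*b⁻¹)^n * w = w * (a*b*a⁻¹*b⁻¹)^n := fun w =>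
      Commute.pow_left (hz w) n
    calc a^(n+1) * b * (a^(n+1))⁻¹ * b⁻¹
        = a * (a^n * b * (a^n)⁻¹ * b⁻¹) * (b * a⁻¹ * b⁻¹) := by
          rw [pow_succ']; simp [mul_assoc]
      _ = a * (a*b*a⁻¹*b⁻¹)^n * (b * a⁻¹ * b⁻¹) := by rw [ih]
      _ = (a*b*a⁻¹*b⁻¹)^n * (a * (b * a⁻¹ * b⁻¹)) := by
          rw [← hzn a, mul_assoc]
      _ = (a*b*a⁻¹*b⁻¹)^(n+1) := by rw [pow_succ]; simp [mul_assoc]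

private lemma ucs_eq {G : Type*} [Group G] {n : ℕ} :
    _root_.upperCentralSeries G n = Subgroup.upperCentralSeries G n := rfl

/-- If the center of a group `G` is torsion-free, then every factor
`Z_{k+1}(G)/Z_k(G)` of the upper central series is torsion-free; in particular,
if moreover `G` is nilpotent, then `G` itself is torsion-free. -/
theorem upperCentral_factors_torsionFree (G : Type*) [Group G]
    (hZ : ∀ g : Subgroup.center G, g ≠ 1 → ¬IsOfFinOrder g) :
    (∀ k : ℕ, ∀ x ∈ upperCentralSeries G (k + 1), ∀ n : ℕ, n ≠ 0 →
        x ^ n ∈ upperCentralSeries G k → x ∈ upperCentralSeries G k) ∧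
      (Group.IsNilpotent G → ∀ g : G, g ≠ 1 → ¬IsOfFinOrder g) := by
  have main : ∀ k : ℕ, ∀ x ∈ upperCentralSeries G (k + 1), ∀ n : ℕ, n ≠ 0 →
      x ^ n ∈ upperCentralSeries G k → x ∈ upperCentralSeries G k := by
    intro k
    induction k with
    | zero =>
      intro x hx n hn hxn
      rw [ucs_eq, upperCentralSeries_zero, Subgroup.mem_bot] at hxn ⊢
      rw [ucs_eq, upperCentralSeries_one] at hx
      by_contra hx1
      have : IsOfFinOrder (⟨x, hx⟩ : Subgroup.center G) := by
        rw [isOfFinOrder_iff_pow_eq_one]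
        exact ⟨n, Nat.pos_of_ne_zero hn, by ext; simpa using hxn⟩
      exact hZ ⟨x, hx⟩ (fun h => hx1 (by simpa using congrArg Subtype.val h)) this
    | succ k ih =>
      intro x hx n hn hxn
      rw [ucs_eq, mem_upperCentralSeries_succ_iff] at hx ⊢
      intro g
      set c := x * g * x⁻¹ * g⁻¹ with hc_def
      have hc : c ∈ upperCentralSeries G (k + 1) := hx g
      refine ih c hc n hn ?_
      -- show c ^ n ∈ upperCentralSeries G k via the quotient
      set N := Subgroup.upperCentralSeries G k
      let π := QuotientGroup.mk' N
      have hker : ∀ y : G, π y = 1 ↔ y ∈ N := fun y => QuotientGroup.eq_one_iff y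
      have hz : ∀ w : G ⧸ N, (π x * π g * (π x)⁻¹ * (π g)⁻¹) * w
          = w * (π x * π g * (π x)⁻¹ * (π g)⁻¹) := by
        intro w
        obtain ⟨y, rfl⟩ := QuotientGroup.mk'_surjective N w
        rw [ucs_eq, mem_upperCentralSeries_succ_iff] at hc
        have h1 : π (c * y * c⁻¹ * y⁻¹) = 1 := (hker _).mpr (hc y)
        have h2 : π c * π y * (π c)⁻¹ * (π y)⁻¹ = 1 := by simpa using h1
        have h3 : π c * π y = π y * π c := by
          have h4 : π c * π y * (π c)⁻¹ = π y := mul_inv_eq_one.mp h2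
          exact mul_inv_eq_iff_eq_mul.mp h4
        exact (by simpa [hc_def, map_mul, map_inv] using h3 :
          π x * π g * (π x)⁻¹ * (π g)⁻¹ * π y = π y * (π x * π g * (π x)⁻¹ * (π g)⁻¹))
      have key := comm_pow_aux (π x) (π g) hz n
      have hxnk : π (x^n * g * (x^n)⁻¹ * g⁻¹) = 1 := by
        rw [hker]
        rw [ucs_eq, mem_upperCentralSeries_succ_iff] at hxn
        exact hxn g
      have : (π x * π g * (π x)⁻¹ * (π g)⁻¹)^n = 1 := by
        rw [← key]; simpa using hxnk
      have hcn : π (c ^ n) = 1 := by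
        simpa [hc_def, map_mul, map_inv, map_pow] using this
      exact (hker _).mp hcn
  refine ⟨main, ?_⟩
  intro hnil
  intro x hx1 hfo
  obtain ⟨m, hm⟩ := hnil.nilpotent
  obtain ⟨n, hn, hxn⟩ := isOfFinOrder_iff_pow_eq_one.mp hfo
  have desc : ∀ k, x ∈ upperCentralSeries G k → x ∈ upperCentralSeries G 0 := by
    intro k
    induction k with
    | zero => exact id
    | succ k ih =>
      intro hk
      exact ih (main k x hk n hn.ne' (by rw [hxn]; exact one_mem _))
  have : x ∈ upperCentralSeries G 0 := desc m (by rw [ucs_eq, hm]; exact Subgroup.mem_top x)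
  exact hx1 (Subgroup.mem_bot.mp this)
end

section
/- In a torsion-free nilpotent group, roots are unique: if a^n = b^n for a nonzero integer n, then a = b. -/
/-- A monoid is torsion-free if no nontrivial elements have finite order
(the definition `Monoid.IsTorsionFree` of the older Mathlib, since removed). -/
def Monoid.IsTorsionFree (G : Type*) [Monoid G] : Prop :=
  ∀ g : G, g ≠ 1 → ¬IsOfFinOrder g

open QuotientGroup

section Aux

variable {H : Type*} [Group H]

/-- If `x ^ n = 1` for `n ≠ 0` in a torsion-free group then `x = 1`. -/
lemma eq_one_of_zpow_eq_one_tf (hT : Monoid.IsTorsionFree H) {x : H} {n : ℤ}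
    (hn : n ≠ 0) (h : x ^ n = 1) : x = 1 := by
  by_contra hx
  exact hT x hx (isOfFinOrder_iff_zpow_eq_one.mpr ⟨n, hn, h⟩)

/-- Conjugation by powers when the commutator is central. -/
lemma conj_zpow_of_center {a b γ : H} (hγ : γ ∈ Subgroup.center H)
    (h : a * b * a⁻¹ = γ * b) (n : ℤ) : a ^ n * b * (a ^ n)⁻¹ = γ ^ n * b := by
  have hka : ∀ k : ℤ, a * γ ^ k = γ ^ k * a := fun k =>
    Subgroup.mem_center_iff.mp (zpow_mem hγ k) a
  have hkainv : ∀ k : ℤ, a⁻¹ * γ ^ k = γ ^ k * a⁻¹ := fun k =>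
    Subgroup.mem_center_iff.mp (zpow_mem hγ k) a⁻¹
  have hinv : a⁻¹ * γ⁻¹ = γ⁻¹ * a⁻¹ :=
    Subgroup.mem_center_iff.mp (inv_mem hγ) a⁻¹
  have h2 : a⁻¹ * (γ * b) * a = b := by rw [← h]; group
  have hneg : a⁻¹ * b * a = γ⁻¹ * b := by
    calc a⁻¹ * b * a = (a⁻¹ * γ⁻¹) * ((γ * b) * a) := by group
      _ = (γ⁻¹ * a⁻¹) * ((γ * b) * a) := by rw [hinv]
      _ = γ⁻¹ * (a⁻¹ * (γ * b) * a) := by group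
      _ = γ⁻¹ * b := by rw [h2]
  induction n using Int.induction_on with
  | zero => simp
  | succ k ih =>
    have e1 : a ^ ((k : ℤ) + 1) = a * a ^ (k : ℤ) := by
      rw [add_comm, zpow_add, zpow_one]
    calc a ^ ((k : ℤ) + 1) * b * (a ^ ((k : ℤ) + 1))⁻¹
        = a * (a ^ (k : ℤ) * b * (a ^ (k : ℤ))⁻¹) * a⁻¹ := by rw [e1]; group
      _ = a * (γ ^ (k : ℤ) * b) * a⁻¹ := by rw [ih]
      _ = (a * γ ^ (k : ℤ)) * (b * a⁻¹) := by group
      _ = (γ ^ (k : ℤ) * a) * (b * a⁻¹) := by rw [hka k]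
      _ = γ ^ (k : ℤ) * (a * b * a⁻¹) := by group
      _ = γ ^ (k : ℤ) * (γ * b) := by rw [h]
      _ = γ ^ ((k : ℤ) + 1) * b := by rw [add_comm, zpow_add, zpow_one]; group
  | pred k ih =>
    have e2 : a ^ (-(k : ℤ) - 1) = a⁻¹ * a ^ (-(k : ℤ)) := by
      rw [sub_eq_add_neg, add_comm, zpow_add, zpow_neg_one]
    calc a ^ (-(k : ℤ) - 1) * b * (a ^ (-(k : ℤ) - 1))⁻¹
        = a⁻¹ * (a ^ (-(k : ℤ)) * b * (a ^ (-(k : ℤ)))⁻¹) * a := by rw [e2]; group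
      _ = a⁻¹ * (γ ^ (-(k : ℤ)) * b) * a := by rw [ih]
      _ = (a⁻¹ * γ ^ (-(k : ℤ))) * (b * a) := by group
      _ = (γ ^ (-(k : ℤ)) * a⁻¹) * (b * a) := by rw [hkainv]
      _ = γ ^ (-(k : ℤ)) * (a⁻¹ * b * a) := by group
      _ = γ ^ (-(k : ℤ)) * (γ⁻¹ * b) := by rw [hneg]
      _ = γ ^ (-(k : ℤ) - 1) * b := by
          rw [sub_eq_add_neg, add_comm, zpow_add, zpow_neg_one]; group

end Aux

section Main

variable {G : Type*} [Group G]

/-- Each step of the upper central series is isolated in the next one. -/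
lemma ucs_isolated_step (hT : Monoid.IsTorsionFree G) {n : ℤ} (hn : n ≠ 0) :
    ∀ (i : ℕ) (x : G), x ∈ Subgroup.upperCentralSeries G (i + 1) →
      x ^ n ∈ Subgroup.upperCentralSeries G i → x ∈ Subgroup.upperCentralSeries G i := by
  intro i
  induction i with
  | zero =>
    intro x _ hxn
    rw [upperCentralSeries_zero, Subgroup.mem_bot] at hxn ⊢
    exact eq_one_of_zpow_eq_one_tf hT hn hxn
  | succ i ih =>
    intro x hx1 hxn
    rw [mem_upperCentralSeries_succ_iff]
    intro y
    set Zi := Subgroup.upperCentralSeries G i with hZi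
    have hnorm : Zi.Normal := inferInstance
    set c : G := x * y * x⁻¹ * y⁻¹ with hc
    have hc1 : c ∈ Subgroup.upperCentralSeries G (i + 1) :=
      mem_upperCentralSeries_succ_iff.mp hx1 y
    -- work in the quotient G ⧸ Zi
    let π : G →* G ⧸ Zi := QuotientGroup.mk' Zi
    have hπker : ∀ g : G, π g = 1 ↔ g ∈ Zi := fun g => QuotientGroup.eq_one_iff g
    -- the image of c is central in the quotient
    have hcen : π c ∈ Subgroup.center (G ⧸ Zi) := by
      rw [Subgroup.mem_center_iff]
      intro q
      obtain ⟨z, rfl⟩ := QuotientGroup.mk'_surjective Zi q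
      have hcz : c * z * c⁻¹ * z⁻¹ ∈ Zi := mem_upperCentralSeries_succ_iff.mp hc1 z
      have : π (c * z * c⁻¹ * z⁻¹) = 1 := (hπker _).mpr hcz
      have h2 : π c * π z * (π c)⁻¹ * (π z)⁻¹ = 1 := by
        simpa [map_mul, map_inv] using this
      have h3 : π c * π z = π z * π c := by
        have := mul_eq_one_iff_eq_inv.mp h2
        rw [inv_inv] at this
        calc π c * π z = (π c * π z * (π c)⁻¹ * (π z)⁻¹) * (π z * π c) := by group
          _ = π z * π c := by rw [h2]; group
      exact h3.symm
    -- key identity: π c ^ n = π ⁅x^n, y⁆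
    have hconj : π x * π y * (π x)⁻¹ = π c * π y := by
      rw [hc]; simp only [map_mul, map_inv]; group
    have hkey := conj_zpow_of_center hcen hconj n
    have hxny : (x ^ n) * y * (x ^ n)⁻¹ * y⁻¹ ∈ Zi :=
      mem_upperCentralSeries_succ_iff.mp hxn y
    have h5 : π ((x ^ n) * y * (x ^ n)⁻¹ * y⁻¹) = 1 := (hπker _).mpr hxny
    have h6 : (π x) ^ n * π y * ((π x) ^ n)⁻¹ * (π y)⁻¹ = 1 := by
      simpa [map_mul, map_inv, map_zpow] using h5
    have h7 : (π c) ^ n = 1 := by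
      have h8 : (π x) ^ n * π y * ((π x) ^ n)⁻¹ = π y := by
        calc (π x) ^ n * π y * ((π x) ^ n)⁻¹
            = ((π x) ^ n * π y * ((π x) ^ n)⁻¹ * (π y)⁻¹) * π y := by group
          _ = π y := by rw [h6]; group
      rw [hkey] at h8
      have h9 : (π c) ^ n * π y = 1 * π y := by rw [h8, one_mul]
      exact mul_right_cancel h9
    have hcn : c ^ n ∈ Zi := by
      rw [← hπker, map_zpow]; exact h7
    exact ih c hc1 hcn

/-- If `x ^ n` lies in a term of the upper central series, so does `x`. -/
lemma ucs_isolated [Group.IsNilpotent G] (hT : Monoid.IsTorsionFree G) {n : ℤ} (hn : n ≠ 0)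
    {i : ℕ} {x : G} (hx : x ^ n ∈ Subgroup.upperCentralSeries G i) : x ∈ Subgroup.upperCentralSeries G i := by
  obtain ⟨k, hk⟩ := Group.IsNilpotent.nilpotent' (G := G)
  have hdesc : ∀ (j : ℕ) (z : G), z ∈ Subgroup.upperCentralSeries G (i + j) →
      z ^ n ∈ Subgroup.upperCentralSeries G i → z ∈ Subgroup.upperCentralSeries G i := by
    intro j
    induction j with
    | zero => intro z hz _; exact hz
    | succ j ihj =>
      intro z hz hzn
      have hz' : z ∈ Subgroup.upperCentralSeries G (i + j) := by
        apply ucs_isolated_step hT hn (i + j) z hz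
        exact upperCentralSeries_mono _ (Nat.le_add_right i j) hzn
      exact ihj z hz' hzn
  refine hdesc k x ?_ hx
  have : Subgroup.upperCentralSeries G k ≤ Subgroup.upperCentralSeries G (i + k) :=
    upperCentralSeries_mono _ (Nat.le_add_left k i)
  exact this (hk ▸ Subgroup.mem_top x)

/-- The center is isolated. -/
lemma center_isolated [Group.IsNilpotent G] (hT : Monoid.IsTorsionFree G) {n : ℤ} (hn : n ≠ 0)
    {x : G} (hx : x ^ n ∈ Subgroup.center G) : x ∈ Subgroup.center G := by
  have := ucs_isolated hT hn (i := 1) (x := x) (by rwa [upperCentralSeries_one])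
  rwa [upperCentralSeries_one] at this

/-- The quotient by the center of a torsion-free nilpotent group is torsion-free. -/
lemma quotient_center_torsionFree [Group.IsNilpotent G] (hT : Monoid.IsTorsionFree G) :
    Monoid.IsTorsionFree (G ⧸ Subgroup.center G) := by
  intro g hg hfin
  obtain ⟨x, rfl⟩ := QuotientGroup.mk'_surjective (Subgroup.center G) g
  obtain ⟨k, hk, hgk⟩ := isOfFinOrder_iff_pow_eq_one.mp hfin
  have hxk : x ^ (k : ℤ) ∈ Subgroup.center G := by
    rw [zpow_natCast, ← QuotientGroup.eq_one_iff]
    simpa using hgk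
  have hx : x ∈ Subgroup.center G :=
    center_isolated hT (by exact_mod_cast hk.ne') hxk
  exact hg (QuotientGroup.eq_one_iff x |>.mpr hx)

end Main

/-- Strong induction on the nilpotency class. -/
lemma unique_roots_aux : ∀ (c : ℕ) (G : Type u) [Group G] [Group.IsNilpotent G],
    Group.nilpotencyClass G ≤ c → Monoid.IsTorsionFree G →
    ∀ (a b : G) (n : ℤ), n ≠ 0 → a ^ n = b ^ n → a = b := by
  intro c
  induction c with
  | zero =>
    intro G _ _ hc _ a b n _ _
    have : Subsingleton G := nilpotencyClass_zero_iff_subsingleton.mp (Nat.le_zero.mp hc)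
    exact Subsingleton.elim a b
  | succ c ih =>
    intro G _ _ hc hT a b n hn h
    let π : G →* G ⧸ Subgroup.center G := QuotientGroup.mk' (Subgroup.center G)
    have hQclass : Group.nilpotencyClass (G ⧸ Subgroup.center G) ≤ c := by
      rw [nilpotencyClass_quotient_center]; omega
    have hQT := quotient_center_torsionFree hT
    have hQ : π a = π b := by
      apply ih (G ⧸ Subgroup.center G) hQclass hQT (π a) (π b) n hn
      rw [← map_zpow, ← map_zpow, h]
    have hz : a⁻¹ * b ∈ Subgroup.center G := by
      rw [← QuotientGroup.eq_one_iff]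
      have h1 : ((a⁻¹ * b : G) : G ⧸ Subgroup.center G) = (π a)⁻¹ * π b := by
        simp [π]
      rw [h1, hQ]
      group
    set z := a⁻¹ * b with hzdef
    have hb : b = a * z := by rw [hzdef]; group
    have hcomm' : Commute a z := by
      unfold Commute SemiconjBy
      exact Subgroup.mem_center_iff.mp hz a
    have hbn : b ^ n = a ^ n * z ^ n := by rw [hb, hcomm'.mul_zpow]
    have hzn : z ^ n = 1 := by
      have h10 : a ^ n * z ^ n = a ^ n * 1 := by rw [mul_one, ← hbn, ← h]
      exact mul_left_cancel h10
    have : z = 1 := eq_one_of_zpow_eq_one_tf hT hn hzn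
    rw [hb, this, mul_one]

/-- In a torsion-free nilpotent group roots are unique: if `a^n = b^n` for a nonzero
integer `n`, then `a = b`. -/
theorem unique_roots_of_torsionFree_nilpotent (G : Type*) [Group G]
    [Group.IsNilpotent G] (hT : Monoid.IsTorsionFree G)
    (a b : G) (n : ℤ) (hn : n ≠ 0) (h : a ^ n = b ^ n) : a = b :=
  unique_roots_aux (Group.nilpotencyClass G) G le_rfl hT a b n hn h
end

section
/- Let G be a torsion-free nilpotent group and a, b ∈ G with nonzero integers n, m such that a^n commutes with b^m. Then a commutes with b. -/
open Subgroup hiding lowerCentralSeries lowerCentralSeries_one nilpotent_iff_lowerCentralSeries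
open scoped commutatorElement

private lemma tf_eq_one_of_pow_eq_one {H : Type*} [Group H] (hT : ∀ g : H, g ≠ 1 → ¬IsOfFinOrder g)
    {g : H} {k : ℕ} (hk : 0 < k) (h : g ^ k = 1) : g = 1 := by
  by_contra hg
  exact hT g hg (isOfFinOrder_iff_pow_eq_one.2 ⟨k, hk, h⟩)

private lemma closure_pairwise_commute {H : Type*} [Group H] {S : Set H}
    (hS : ∀ s ∈ S, ∀ t ∈ S, Commute s t) :
    ∀ x ∈ closure S, ∀ y ∈ closure S, Commute x y := by
  have h1 : ∀ s ∈ S, ∀ y ∈ closure S, Commute s y := by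
    intro s hs y hy
    have hle : closure S ≤ centralizer {s} := by
      rw [closure_le]
      intro t ht
      have : t ∈ centralizer {s} := mem_centralizer_singleton_iff.2 (hS s hs t ht).eq.symm
      exact this
    have hy' : y ∈ centralizer {s} := hle hy
    have : s * y = y * s := (mem_centralizer_singleton_iff.1 hy').symm
    exact this
  intro x hx y hy
  have hle : closure S ≤ centralizer {y} := by
    rw [closure_le]
    intro s hs
    have : s ∈ centralizer {y} := mem_centralizer_singleton_iff.2 (h1 s hs y hy).eq
    exact this
  have hx' : x ∈ centralizer {y} := hle hx
  have : x * y = y * x := mem_centralizer_singleton_iff.1 hx'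
  exact this

private lemma commN_le {G : Type*} [Group G] (a : G) :
    ⁅closure ({a} ∪ (Subgroup.lowerCentralSeries (⊤ : Subgroup G) 1 : Set G)),
     closure ({a} ∪ (Subgroup.lowerCentralSeries (⊤ : Subgroup G) 1 : Set G))⁆ ≤ Subgroup.lowerCentralSeries (⊤ : Subgroup G) 2 := by
  set S : Set G := {a} ∪ (Subgroup.lowerCentralSeries (⊤ : Subgroup G) 1 : Set G) with hS
  set L2 := Subgroup.lowerCentralSeries (⊤ : Subgroup G) 2 with hL2
  let π : G →* G ⧸ L2 := QuotientGroup.mk' L2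
  have hmem : ∀ g : G, π g = 1 ↔ g ∈ L2 := fun g => QuotientGroup.eq_one_iff g
  have hL1L1 : ⁅Subgroup.lowerCentralSeries (⊤ : Subgroup G) 1, Subgroup.lowerCentralSeries (⊤ : Subgroup G) 1⁆ ≤ L2 :=
    commutator_mono le_rfl le_top
  have hTL1 : ⁅(⊤ : Subgroup G), Subgroup.lowerCentralSeries (⊤ : Subgroup G) 1⁆ ≤ L2 :=
    (commutator_comm _ _).le
  have hpair : ∀ s ∈ π '' S, ∀ t ∈ π '' S, Commute s t := by
    rintro _ ⟨s₀, hs₀, rfl⟩ _ ⟨t₀, ht₀, rfl⟩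
    rw [← commutatorElement_eq_one_iff_commute, ← map_commutatorElement, hmem]
    rcases hs₀ with hs₀ | hs₀ <;> rcases ht₀ with ht₀ | ht₀
    · rw [Set.mem_singleton_iff] at hs₀ ht₀
      subst hs₀; subst ht₀
      rw [commutatorElement_self]; exact one_mem _
    · rw [Set.mem_singleton_iff] at hs₀; subst hs₀
      exact hTL1 (commutator_mem_commutator (mem_top _) ht₀)
    · rw [Set.mem_singleton_iff] at ht₀; subst ht₀
      have : ⁅t₀, s₀⁆ ∈ L2 := hTL1 (commutator_mem_commutator (mem_top _) hs₀)
      have h2 : ⁅s₀, t₀⁆⁻¹ ∈ L2 := by rw [commutatorElement_inv]; exact this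
      simpa using inv_mem h2
    · exact hL1L1 (commutator_mem_commutator hs₀ ht₀)
  rw [commutator_le]
  intro x hx z hz
  have hxm : π x ∈ closure (π '' S) := by
    rw [← MonoidHom.map_closure]; exact ⟨x, hx, rfl⟩
  have hzm : π z ∈ closure (π '' S) := by
    rw [← MonoidHom.map_closure]; exact ⟨z, hz, rfl⟩
  have := closure_pairwise_commute hpair _ hxm _ hzm
  rw [← commutatorElement_eq_one_iff_commute, ← map_commutatorElement, hmem] at this
  exact this

private lemma lcs_N_le {G : Type*} [Group G] (a : G) (k : ℕ) :
    (Subgroup.lowerCentralSeries (⊤ : Subgroup (closure ({a} ∪ (Subgroup.lowerCentralSeries (⊤ : Subgroup G) 1 : Set G)))) (k + 1)).map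
      (closure ({a} ∪ (Subgroup.lowerCentralSeries (⊤ : Subgroup G) 1 : Set G))).subtype
      ≤ Subgroup.lowerCentralSeries (⊤ : Subgroup G) (k + 2) := by
  set N : Subgroup G := closure ({a} ∪ (Subgroup.lowerCentralSeries (⊤ : Subgroup G) 1 : Set G)) with hN
  induction k with
  | zero =>
      have h1 : (Subgroup.lowerCentralSeries (⊤ : Subgroup ↥N) 1).map N.subtype = ⁅N, N⁆ := by
        rw [lowerCentralSeries_one, commutator_def, map_commutator,
          ← MonoidHom.range_eq_map, range_subtype]
      rw [h1]
      exact commN_le a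
  | succ k ih =>
      show Subgroup.map N.subtype ⁅Subgroup.lowerCentralSeries (⊤ : Subgroup ↥N) (k + 1), (⊤ : Subgroup ↥N)⁆
        ≤ ⁅Subgroup.lowerCentralSeries (⊤ : Subgroup G) (k + 2), (⊤ : Subgroup G)⁆
      rw [map_commutator]
      exact commutator_mono ih le_top

private lemma key_commute : ∀ (c : ℕ) (G : Type u) [Group G], (∀ g : G, g ≠ 1 → ¬IsOfFinOrder g) →
    Subgroup.lowerCentralSeries (⊤ : Subgroup G) c = ⊥ → ∀ a b : G, ∀ k : ℕ, 0 < k →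
    Commute (a ^ k) b → Commute a b := by
  intro c
  induction c with
  | zero =>
      intro G _ _ hc a b k hk h
      have ha : a ∈ (⊥ : Subgroup G) := hc ▸ mem_top a
      rw [mem_bot] at ha
      rw [ha]
      exact Commute.one_left b
  | succ c ih =>
      intro G _ hT hc a b k hk h
      rcases Nat.eq_zero_or_pos c with rfl | hcpos
      · -- abelian case
        have : ⁅a, b⁆ ∈ Subgroup.lowerCentralSeries (⊤ : Subgroup G) 1 :=
          commutator_mem_commutator (mem_top a) (mem_top b)
        rw [hc, mem_bot] at this
        exact commutatorElement_eq_one_iff_commute.1 this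
      · obtain ⟨c', rfl⟩ := Nat.exists_eq_add_of_le hcpos
        set N : Subgroup G := closure ({a} ∪ (Subgroup.lowerCentralSeries (⊤ : Subgroup G) 1 : Set G)) with hN
        have haN : a ∈ N := subset_closure (Or.inl rfl)
        have hcomm1 : a⁻¹ * b⁻¹ * a * b ∈ Subgroup.lowerCentralSeries (⊤ : Subgroup G) 1 := by
          have h0 : ⁅a⁻¹, b⁻¹⁆ ∈ Subgroup.lowerCentralSeries (⊤ : Subgroup G) 1 :=
            commutator_mem_commutator (mem_top a⁻¹) (mem_top b⁻¹)
          have he : ⁅a⁻¹, b⁻¹⁆ = a⁻¹ * b⁻¹ * a * b := by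
            rw [commutatorElement_def]; group
          rwa [he] at h0
        have hyN : b⁻¹ * a * b ∈ N := by
          have he : b⁻¹ * a * b = a * (a⁻¹ * b⁻¹ * a * b) := by group
          rw [he]
          exact mul_mem (subset_closure (Or.inl rfl)) (subset_closure (Or.inr hcomm1))
        set x : ↥N := ⟨a, haN⟩ with hx
        set y : ↥N := ⟨b⁻¹ * a * b, hyN⟩ with hy
        have hconj : b⁻¹ * a ^ k * b = a ^ k := by
          rw [mul_assoc, h.eq, ← mul_assoc, inv_mul_cancel, one_mul]
        have hxy : y ^ k = x ^ k := by
          ext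
          push_cast
          calc (b⁻¹ * a * b) ^ k = (b⁻¹ * a * (b⁻¹)⁻¹) ^ k := by rw [inv_inv]
            _ = b⁻¹ * a ^ k * (b⁻¹)⁻¹ := conj_pow
            _ = a ^ k := by rw [inv_inv]; exact hconj
        have hcomm2 : Commute (x ^ k) y := by
          rw [← hxy]; exact (Commute.refl y).pow_left k
        have hTN : ∀ g : ↥N, g ≠ 1 → ¬IsOfFinOrder g :=
            fun g hg hfo => hT (g : G) (fun h1 => hg (Subtype.ext h1)) (by
              obtain ⟨k, hk, hp⟩ := isOfFinOrder_iff_pow_eq_one.1 hfo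
              exact isOfFinOrder_iff_pow_eq_one.2 ⟨k, hk, by rw [← Subgroup.coe_pow, hp, Subgroup.coe_one]⟩)
        have hcN : Subgroup.lowerCentralSeries (⊤ : Subgroup ↥N) (1 + c') = ⊥ := by
          rw [eq_bot_iff]
          intro g hg
          rw [add_comm] at hg
          have : (g : G) ∈ Subgroup.lowerCentralSeries (⊤ : Subgroup G) (c' + 2) :=
            lcs_N_le a c' ⟨g, hg, rfl⟩
          rw [show c' + 2 = 1 + c' + 1 by omega, hc, mem_bot] at this
          rw [mem_bot]
          exact Subtype.ext this
        have hxycomm : Commute x y := ih ↥N hTN hcN x y k hk hcomm2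
        have hone : (x * y⁻¹) ^ k = 1 := by
          rw [(hxycomm.inv_right).mul_pow, inv_pow, hxy, mul_inv_cancel]
        have hxeqy : x = y := by
          have := tf_eq_one_of_pow_eq_one hTN hk hone
          rwa [mul_inv_eq_one] at this
        have heq : a = b⁻¹ * a * b := congrArg Subtype.val hxeqy
        show a * b = b * a
        calc a * b = b * (b⁻¹ * a * b) := by group
          _ = b * a := by rw [← heq]

/-- In a torsion-free nilpotent group, if `a^n` commutes with `b^m` for nonzero
integers `n, m`, then `a` commutes with `b`. -/
theorem commute_of_zpow_commute (G : Type*) [Group G]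
    [Group.IsNilpotent G] (hT : ∀ g : G, g ≠ 1 → ¬IsOfFinOrder g)
    (a b : G) (n m : ℤ) (hn : n ≠ 0) (hm : m ≠ 0)
    (h : Commute (a ^ n) (b ^ m)) : Commute a b := by
  obtain ⟨c, hc⟩ := nilpotent_iff_lowerCentralSeries.1 ‹Group.IsNilpotent G›
  have key' : ∀ (x y : G) (j : ℤ), j ≠ 0 → Commute (x ^ j) y → Commute x y := by
    intro x y j hj hcom
    have hk : 0 < j.natAbs := Int.natAbs_pos.2 hj
    have hcom' : Commute (x ^ j.natAbs) y := by
      rcases Int.natAbs_eq j with he | he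
      · rw [he, zpow_natCast] at hcom; exact hcom
      · rw [he, zpow_neg, zpow_natCast] at hcom
        exact (Commute.inv_left_iff).1 hcom
    exact key_commute c G hT hc x y j.natAbs hk hcom'
  have h1 : Commute a (b ^ m) := key' a (b ^ m) n hn h
  exact (key' b a m hm h1.symm).symm
end

section
/- Let G be a finitely generated torsion-free nilpotent group in which all centralizers of elements outside [G,G] are abelian (HFL-centralizers). Then for a, b ∈ G \ [G,G], a and b are co-centralized if and only if [a,b] = 1; in particular co-centralization is an equivalence relation on G \ [G,G]. -/
open scoped commutatorElement

/-- In a finitely generated torsion-free nilpotent group `G` in which the centralizer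
of every element outside `[G,G]` is abelian (HFL-centralizers), two elements
`a, b ∈ G \ [G,G]` are co-centralized (`b = a·c` for some `c ∈ C_G(b)`) if and only if
`[a,b] = 1`; in particular co-centralization is an equivalence relation on `G \ [G,G]`. -/
theorem cocentralized_iff_commute (G : Type*) [Group G]
    [Group.IsNilpotent G] (hFG : Group.FG G) (hT : ∀ g : G, g ≠ 1 → ¬IsOfFinOrder g)
    (hHFL : ∀ a : G, a ∉ commutator G → IsMulCommutative (Subgroup.centralizer {a})) :
    (∀ a b : G, a ∉ commutator G → b ∉ commutator G →
        ((∃ c ∈ Subgroup.centralizer {b}, b = a * c) ↔ ⁅a, b⁆ = 1)) ∧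
      Equivalence (fun a b : {g : G // g ∉ commutator G} =>
        ∃ c ∈ Subgroup.centralizer {(b : G)}, (b : G) = (a : G) * c) := by
  have key : ∀ a b : G, (∃ c ∈ Subgroup.centralizer {b}, b = a * c) ↔ ⁅a, b⁆ = 1 := by
    intro a b
    constructor
    · rintro ⟨c, hc, rfl⟩
      rw [Subgroup.mem_centralizer_singleton_iff] at hc
      have hC : Commute c (a * c) := hc
      have h3 : Commute ((a * c) * c⁻¹) (a * c) :=
        Commute.mul_left (Commute.refl _) hC.inv_left
      have ha : (a * c) * c⁻¹ = a := by group
      rw [ha] at h3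
      exact commutatorElement_eq_one_iff_mul_comm.mpr h3
    · intro h
      have hab : Commute a b := commutatorElement_eq_one_iff_mul_comm.mp h
      refine ⟨a⁻¹ * b, ?_, by group⟩
      rw [Subgroup.mem_centralizer_singleton_iff]
      exact Commute.mul_left hab.inv_left (Commute.refl b)
  refine ⟨fun a b _ _ => key a b, ?_⟩
  have commIff : ∀ a b : G, (∃ c ∈ Subgroup.centralizer {b}, b = a * c) ↔ Commute a b := by
    intro a b
    rw [key a b]
    exact commutatorElement_eq_one_iff_mul_comm
  constructor
  · intro a
    exact (commIff _ _).mpr (Commute.refl _)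
  · intro a b h
    exact (commIff _ _).mpr ((commIff _ _).mp h).symm
  · intro a b c hab hbc
    replace hab := (commIff _ _).mp hab
    replace hbc := (commIff _ _).mp hbc
    have hB := hHFL b b.2
    have ha : (a : G) ∈ Subgroup.centralizer {(b : G)} :=
      Subgroup.mem_centralizer_singleton_iff.mpr hab
    have hc : (c : G) ∈ Subgroup.centralizer {(b : G)} :=
      Subgroup.mem_centralizer_singleton_iff.mpr hbc.symm
    refine (commIff _ _).mpr ?_
    exact Subgroup.mul_comm_of_mem_isMulCommutative _ ha hc
end
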